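/- Let τ, σ ∈ H. Then there exists ε > 0 such that for all z ∈ ℂ with |z| < ε, the series ∑_{j=1}^∞ (Z_j(τ,σ)/j) (−z)^j converges absolutely and Γ(z+σ, τ, σ)/Γ(σ, τ, σ) = exp( ∑_{j=1}^∞ (Z_j(τ,σ)/j) (−z)^j ). -/

import Mathlib

open Complex Filter Topology
set_option maxHeartbeats 1000000

/-- The open upper half-plane as a subset of `ℂ`. -/
def UHP : Set ℂ := {z : ℂ | 0 < z.im}

/-- `qexp τ = e^{2πiτ}`. -/
noncomputable def qexp (τ : ℂ) : ℂ := Complex.exp (2 * Real.pi * Complex.I * τ)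

/-- Elliptic zeta values `Z_k(τ,σ)`. -/
noncomputable def ellipticZeta (k : ℕ) (τ σ : ℂ) : ℂ :=
  -((2 * (Real.pi : ℂ) * Complex.I) ^ k / (Nat.factorial (k - 1) : ℂ)) *
    ∑' j : ℕ+, (j : ℂ) ^ (k - 1) *
      (qexp τ ^ (j : ℕ) - (-1 : ℂ) ^ k * qexp σ ^ (j : ℕ)) /
      ((1 - qexp τ ^ (j : ℕ)) * (1 - qexp σ ^ (j : ℕ)))

/-- `D_k(q)`: the normalized generating function of sums of `(k-1)`-st powers of divisors. -/
noncomputable def Dk (k : ℕ) (q : ℂ) : ℂ :=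
  ((-2 * (Real.pi : ℂ) * Complex.I) ^ k / (Nat.factorial (k - 1) : ℂ)) *
    ∑' n : ℕ+, (∑ d ∈ Nat.divisors (n : ℕ), (d : ℂ) ^ (k - 1)) * q ^ (n : ℕ)

/-- Ruijsenaars's elliptic gamma function. -/
noncomputable def ellipticGamma (z τ σ : ℂ) : ℂ :=
  ∏' p : ℕ × ℕ,
    (1 - qexp τ ^ (p.1 + 1) * qexp σ ^ (p.2 + 1) * Complex.exp (-(2 * Real.pi * Complex.I) * z)) /
    (1 - qexp τ ^ p.1 * qexp σ ^ p.2 * Complex.exp (2 * Real.pi * Complex.I * z))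

/-- The modified theta function `θ₀(z,τ)`. -/
noncomputable def theta0 (z τ : ℂ) : ℂ :=
  ∏' j : ℕ, (1 - qexp τ ^ (j + 1) * Complex.exp (-(2 * Real.pi * Complex.I) * z)) *
            (1 - qexp τ ^ j * Complex.exp (2 * Real.pi * Complex.I * z))

/-- A modular form of weight `k` for `SL(2,ℤ)`: a holomorphic function on the
upper half-plane transforming with weight `k` under `SL(2,ℤ)` and bounded as `Im τ → ∞`. -/
def IsModularForm (k : ℕ) (G : ℂ → ℂ) : Prop :=
  DifferentiableOn ℂ G UHP ∧
  (∀ A : Matrix.SpecialLinearGroup (Fin 2) ℤ, ∀ τ ∈ UHP,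
      G (((A 0 0 : ℤ) * τ + (A 0 1 : ℤ)) / ((A 1 0 : ℤ) * τ + (A 1 1 : ℤ))) =
        ((A 1 0 : ℤ) * τ + (A 1 1 : ℤ)) ^ k * G τ) ∧
  (∃ C : ℝ, ∀ τ ∈ UHP, 1 ≤ τ.im → ‖G τ‖ ≤ C)

/-- All factors in the defining double product of the elliptic gamma function are nonzero. -/
def EGFactorsNeZero (z τ σ : ℂ) : Prop :=
  ∀ j ℓ : ℕ,
    (1 - qexp τ ^ (j + 1) * qexp σ ^ (ℓ + 1) * Complex.exp (-(2 * Real.pi * Complex.I) * z)) ≠ 0 ∧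
    (1 - qexp τ ^ j * qexp σ ^ ℓ * Complex.exp (2 * Real.pi * Complex.I * z)) ≠ 0



section EZHelpers

/-- `EZlt w = ∑_{n≥1} w^n / n` (equals `-log(1-w)` for `‖w‖<1`). -/
noncomputable def EZlt (w : ℂ) : ℂ := ∑' n : ℕ+, w ^ (n : ℕ) / ((n : ℕ) : ℂ)

/-- The log of one factor of the elliptic gamma function. -/
noncomputable def EZlog (q r u v : ℂ) (p : ℕ × ℕ) : ℂ :=
  EZlt (q ^ p.1 * r ^ (p.2 + 1) * u) - EZlt (q ^ (p.1 + 1) * r ^ p.2 * v)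

lemma EZ_hasSum_pnat {M : Type*} [AddCommMonoid M] [TopologicalSpace M] {f : ℕ → M} {a : M}
    (hf : HasSum f a) (h0 : f 0 = 0) : HasSum (fun n : ℕ+ => f (n : ℕ)) a := by
  refine (Function.Injective.hasSum_iff (fun a b h => PNat.coe_injective h) ?_).2 hf
  intro x hx
  rcases Nat.eq_zero_or_pos x with rfl | hxpos
  · exact h0
  · exact absurd ⟨⟨x, hxpos⟩, rfl⟩ hx

lemma EZ_hasSum_pnat_shift {M : Type*} [AddCommMonoid M] [TopologicalSpace M] {f : ℕ → M} {a : M}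
    (hf : HasSum (fun n => f (n + 1)) a) : HasSum (fun n : ℕ+ => f (n : ℕ)) a := by
  have h : ((fun n : ℕ+ => f (n : ℕ)) ∘ Equiv.pnatEquivNat.symm) = fun n : ℕ => f (n + 1) := by
    funext n
    simp [Equiv.pnatEquivNat]
  exact (Equiv.hasSum_iff Equiv.pnatEquivNat.symm).1 (h ▸ hf)

lemma EZ_hasSum_log {w : ℂ} (hw : ‖w‖ < 1) :
    HasSum (fun n : ℕ+ => w ^ (n : ℕ) / ((n : ℕ) : ℂ)) (-Complex.log (1 - w)) :=
  EZ_hasSum_pnat (Complex.hasSum_taylorSeries_neg_log hw) (by simp)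

lemma EZ_hasSum_EZlt {w : ℂ} (hw : ‖w‖ < 1) :
    HasSum (fun n : ℕ+ => w ^ (n : ℕ) / ((n : ℕ) : ℂ)) (EZlt w) := by
  unfold EZlt
  exact (EZ_hasSum_log hw).summable.hasSum

lemma EZ_EZlt_eq {w : ℂ} (hw : ‖w‖ < 1) : EZlt w = -Complex.log (1 - w) := by
  unfold EZlt
  exact (EZ_hasSum_log hw).tsum_eq

lemma EZ_one_sub_ne {w : ℂ} (hw : ‖w‖ < 1) : (1 : ℂ) - w ≠ 0 := by
  intro h
  rw [sub_eq_zero] at h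
  rw [← h] at hw
  simp at hw

lemma EZ_factor {α β : ℂ} (hα : ‖α‖ < 1) (hβ : ‖β‖ < 1) :
    (1 - α) / (1 - β) = Complex.exp (EZlt β - EZlt α) := by
  rw [EZ_EZlt_eq hα, EZ_EZlt_eq hβ,
    show -Complex.log (1 - β) - -Complex.log (1 - α)
      = Complex.log (1 - α) - Complex.log (1 - β) by ring,
    Complex.exp_sub, Complex.exp_log (EZ_one_sub_ne hα), Complex.exp_log (EZ_one_sub_ne hβ)]

lemma EZ_hasSum_pnat_geom {K : Type*} [NormedDivisionRing K] {t : K} (ht : ‖t‖ < 1) :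
    HasSum (fun n : ℕ+ => t ^ (n : ℕ)) (t * (1 - t)⁻¹) := by
  apply EZ_hasSum_pnat_shift
  have h := (hasSum_geometric_of_norm_lt_one ht).mul_left t
  simpa only [pow_succ'] using h

lemma EZ_hasSum_pnat_expm1 (w : ℂ) :
    HasSum (fun k : ℕ+ => w ^ (k : ℕ) / ((Nat.factorial (k : ℕ) : ℂ))) (Complex.exp w - 1) := by
  have H : HasSum (fun k : ℕ => w ^ k / ((Nat.factorial k : ℂ))) (Complex.exp w) := by
    rw [Complex.exp_eq_exp_ℂ]
    exact NormedSpace.expSeries_div_hasSum_exp w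
  exact EZ_hasSum_pnat_shift (f := fun k : ℕ => w ^ k / ((Nat.factorial k : ℂ)))
    (by simpa using (hasSum_nat_add_iff' 1).2 H)

lemma EZ_hasSum_pnat_expm1_real (t : ℝ) :
    HasSum (fun k : ℕ+ => t ^ (k : ℕ) / ((Nat.factorial (k : ℕ) : ℝ))) (Real.exp t - 1) := by
  have H : HasSum (fun k : ℕ => t ^ k / ((Nat.factorial k : ℝ))) (Real.exp t) := by
    rw [Real.exp_eq_exp_ℝ]
    exact NormedSpace.expSeries_div_hasSum_exp t
  exact EZ_hasSum_pnat_shift (f := fun k : ℕ => t ^ k / ((Nat.factorial k : ℝ)))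
    (by simpa using (hasSum_nat_add_iff' 1).2 H)

lemma EZ_norm_EZlt_le {w : ℂ} {δ : ℝ} (hw : ‖w‖ ≤ δ) (hδ : δ < 1) :
    ‖EZlt w‖ ≤ ‖w‖ * (1 - δ)⁻¹ := by
  have hw1 : ‖w‖ < 1 := lt_of_le_of_lt hw hδ
  have hg : HasSum (fun n : ℕ+ => ‖w‖ ^ (n : ℕ)) (‖w‖ * (1 - ‖w‖)⁻¹) :=
    EZ_hasSum_pnat_geom (by rwa [Real.norm_eq_abs, _root_.abs_of_nonneg (norm_nonneg w)])
  have hle : ∀ n : ℕ+, ‖w ^ (n : ℕ) / ((n : ℕ) : ℂ)‖ ≤ ‖w‖ ^ (n : ℕ) := by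
    intro n
    rw [norm_div, norm_pow]
    have h1 : (1 : ℝ) ≤ ‖((n : ℕ) : ℂ)‖ := by
      rw [Complex.norm_natCast]
      exact_mod_cast n.one_le
    exact div_le_self (by positivity) h1
  have hs : Summable (fun n : ℕ+ => ‖w ^ (n : ℕ) / ((n : ℕ) : ℂ)‖) :=
    hg.summable.of_nonneg_of_le (fun n => norm_nonneg _) hle
  have hmono : (1 - ‖w‖)⁻¹ ≤ (1 - δ)⁻¹ := by
    apply inv_anti₀ (by linarith) (by linarith)
  calc ‖EZlt w‖ ≤ ∑' n : ℕ+, ‖w ^ (n : ℕ) / ((n : ℕ) : ℂ)‖ := norm_tsum_le_tsum_norm hs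
    _ ≤ ∑' n : ℕ+, ‖w‖ ^ (n : ℕ) := Summable.tsum_le_tsum hle hs hg.summable
    _ = ‖w‖ * (1 - ‖w‖)⁻¹ := hg.tsum_eq
    _ ≤ ‖w‖ * (1 - δ)⁻¹ := by
        exact mul_le_mul_of_nonneg_left hmono (norm_nonneg w)

lemma EZ_pow_bound {α ρ E : ℝ} (hα0 : 0 ≤ α) (hα1 : α ≤ 1) (hρ0 : 0 ≤ ρ) (hE : 1 ≤ E)
    (n : ℕ) (hn : n ≠ 0) : (α * ρ) ^ n * (E ^ n + 1) ≤ 2 * α * (ρ * E) ^ n := by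
  have hE0 : (0:ℝ) ≤ E := le_trans zero_le_one hE
  have h1 : α ^ n ≤ α := pow_le_of_le_one hα0 hα1 hn
  have h2 : ρ ^ n ≤ ρ ^ n * E ^ n :=
    le_mul_of_one_le_right (by positivity) (by simpa using pow_le_pow_left₀ zero_le_one hE n)
  calc (α * ρ) ^ n * (E ^ n + 1) = α ^ n * (ρ ^ n * E ^ n) + α ^ n * ρ ^ n := by
        rw [mul_pow]; ring
    _ ≤ α * (ρ ^ n * E ^ n) + α * (ρ ^ n * E ^ n) := by
        refine add_le_add (mul_le_mul_of_nonneg_right h1 (by positivity)) ?_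
        exact mul_le_mul h1 h2 (by positivity) hα0
    _ = 2 * α * (ρ * E) ^ n := by rw [mul_pow]; ring

end EZHelpers

section EZProd

lemma EZ_small {q r u : ℂ} {ρ E : ℝ} (hq : ‖q‖ ≤ ρ) (hr : ‖r‖ ≤ ρ) (hu : ‖u‖ ≤ E)
    (hρ0 : 0 ≤ ρ) (hE : 1 ≤ E) (i j : ℕ) :
    ‖q ^ i * r ^ j * u‖ ≤ ρ ^ i * ρ ^ j * E := by
  rw [norm_mul, norm_mul, norm_pow, norm_pow]
  have h1 : ‖q‖ ^ i ≤ ρ ^ i := pow_le_pow_left₀ (norm_nonneg q) hq i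
  have h2 : ‖r‖ ^ j ≤ ρ ^ j := pow_le_pow_left₀ (norm_nonneg r) hr j
  exact mul_le_mul (mul_le_mul h1 h2 (by positivity) (by positivity)) hu (norm_nonneg u)
    (by positivity)

lemma EZ_small' {q r u : ℂ} {ρ E : ℝ} (hq : ‖q‖ ≤ ρ) (hr : ‖r‖ ≤ ρ) (hu : ‖u‖ ≤ E)
    (hρ0 : 0 ≤ ρ) (hρ1 : ρ ≤ 1) (hE : 1 ≤ E) {i j : ℕ} (hij : 1 ≤ i + j) :
    ‖q ^ i * r ^ j * u‖ ≤ ρ * E := by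
  refine le_trans (EZ_small hq hr hu hρ0 hE i j) ?_
  have h1 : ρ ^ i * ρ ^ j ≤ ρ := by
    rw [← pow_add]
    calc ρ ^ (i + j) ≤ ρ ^ 1 := pow_le_pow_of_le_one hρ0 hρ1 hij
      _ = ρ := pow_one ρ
  exact mul_le_mul_of_nonneg_right h1 (by linarith)

lemma EZ_prod_exp {q r u v : ℂ} {ρ E : ℝ} (hq : ‖q‖ ≤ ρ) (hr : ‖r‖ ≤ ρ)
    (hu : ‖u‖ ≤ E) (hv : ‖v‖ ≤ E) (hE : 1 ≤ E) (hρ0 : 0 ≤ ρ) (hρE : ρ * E < 1) :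
    Summable (EZlog q r u v) ∧
      (∏' p : ℕ × ℕ, ((1 - q ^ (p.1 + 1) * r ^ p.2 * v) / (1 - q ^ p.1 * r ^ (p.2 + 1) * u)))
        = Complex.exp (∑' p : ℕ × ℕ, EZlog q r u v p) := by
  have hρ1 : ρ < 1 := lt_of_le_of_lt (le_mul_of_one_le_right hρ0 hE) hρE
  have hE0 : (0:ℝ) < E := lt_of_lt_of_le one_pos hE
  have hb : ∀ p : ℕ × ℕ, ‖q ^ p.1 * r ^ (p.2 + 1) * u‖ ≤ ρ * E := fun p =>
    EZ_small' hq hr hu hρ0 hρ1.le hE (by omega)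
  have ha : ∀ p : ℕ × ℕ, ‖q ^ (p.1 + 1) * r ^ p.2 * v‖ ≤ ρ * E := fun p =>
    EZ_small' hq hr hv hρ0 hρ1.le hE (by omega)
  have hb1 : ∀ p : ℕ × ℕ, ‖q ^ p.1 * r ^ (p.2 + 1) * u‖ < 1 := fun p => lt_of_le_of_lt (hb p) hρE
  have ha1 : ∀ p : ℕ × ℕ, ‖q ^ (p.1 + 1) * r ^ p.2 * v‖ < 1 := fun p => lt_of_le_of_lt (ha p) hρE
  have hsum : Summable (EZlog q r u v) := by
    have hinv0 : (0:ℝ) ≤ (1 - ρ * E)⁻¹ := inv_nonneg.2 (by linarith)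
    have hbound : ∀ p : ℕ × ℕ,
        ‖EZlog q r u v p‖ ≤ (2 * (ρ * E) * (1 - ρ * E)⁻¹) * (ρ ^ p.1 * ρ ^ p.2) := by
      intro p
      have hnb : ‖q ^ p.1 * r ^ (p.2 + 1) * u‖ ≤ ρ ^ p.1 * ρ ^ p.2 * (ρ * E) := by
        refine le_trans (EZ_small hq hr hu hρ0 hE p.1 (p.2 + 1)) ?_
        rw [pow_succ]; ring_nf; exact le_refl _
      have hna : ‖q ^ (p.1 + 1) * r ^ p.2 * v‖ ≤ ρ ^ p.1 * ρ ^ p.2 * (ρ * E) := by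
        refine le_trans (EZ_small hq hr hv hρ0 hE (p.1 + 1) p.2) ?_
        rw [pow_succ]; ring_nf; exact le_refl _
      have h1 : ‖EZlt (q ^ p.1 * r ^ (p.2 + 1) * u)‖
          ≤ (ρ ^ p.1 * ρ ^ p.2 * (ρ * E)) * (1 - ρ * E)⁻¹ :=
        le_trans (EZ_norm_EZlt_le (hb p) hρE)
          (mul_le_mul_of_nonneg_right hnb hinv0)
      have h2 : ‖EZlt (q ^ (p.1 + 1) * r ^ p.2 * v)‖
          ≤ (ρ ^ p.1 * ρ ^ p.2 * (ρ * E)) * (1 - ρ * E)⁻¹ :=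
        le_trans (EZ_norm_EZlt_le (ha p) hρE)
          (mul_le_mul_of_nonneg_right hna hinv0)
      calc ‖EZlog q r u v p‖
          ≤ ‖EZlt (q ^ p.1 * r ^ (p.2 + 1) * u)‖ + ‖EZlt (q ^ (p.1 + 1) * r ^ p.2 * v)‖ :=
            norm_sub_le _ _
        _ ≤ (ρ ^ p.1 * ρ ^ p.2 * (ρ * E)) * (1 - ρ * E)⁻¹
            + (ρ ^ p.1 * ρ ^ p.2 * (ρ * E)) * (1 - ρ * E)⁻¹ := add_le_add h1 h2
        _ = (2 * (ρ * E) * (1 - ρ * E)⁻¹) * (ρ ^ p.1 * ρ ^ p.2) := by ring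
    have hgeo : Summable (fun p : ℕ × ℕ => ρ ^ p.1 * ρ ^ p.2) :=
      (summable_geometric_of_lt_one hρ0 hρ1).mul_of_nonneg
        (summable_geometric_of_lt_one hρ0 hρ1) (fun i => by positivity) (fun j => by positivity)
    exact Summable.of_norm_bounded (hgeo.mul_left _) hbound
  refine ⟨hsum, ?_⟩
  have hfac : ∀ p : ℕ × ℕ,
      (1 - q ^ (p.1 + 1) * r ^ p.2 * v) / (1 - q ^ p.1 * r ^ (p.2 + 1) * u)
        = Complex.exp (EZlog q r u v p) := fun p => EZ_factor (ha1 p) (hb1 p)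
  rw [tprod_congr hfac]
  exact (hsum.hasSum.cexp).tprod_eq

end EZProd

section EZCore

/-- The `k`-th term of the Taylor series, with `q,r` as parameters. -/
noncomputable def EZT (q r z : ℂ) (k : ℕ+) : ℂ :=
  -((2 * (Real.pi : ℂ) * Complex.I) ^ (k : ℕ) / (Nat.factorial ((k : ℕ) - 1) : ℂ)) *
    (∑' j : ℕ+, (j : ℂ) ^ ((k : ℕ) - 1) *
      (q ^ (j : ℕ) - (-1 : ℂ) ^ (k : ℕ) * r ^ (j : ℕ)) /
      ((1 - q ^ (j : ℕ)) * (1 - r ^ (j : ℕ)))) / (k : ℂ) * (-z) ^ (k : ℕ)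

noncomputable def EZg (q r x y : ℂ) (pn : (ℕ × ℕ) × ℕ+) : ℂ :=
  ((q ^ pn.1.1 * r ^ (pn.1.2 + 1)) ^ (pn.2 : ℕ) * (x ^ (pn.2 : ℕ) - 1)
    - (q ^ (pn.1.1 + 1) * r ^ pn.1.2) ^ (pn.2 : ℕ) * (y ^ (pn.2 : ℕ) - 1)) / ((pn.2 : ℕ) : ℂ)

noncomputable def EZd (q r z : ℂ) (n k : ℕ+) : ℂ :=
  (1 - q ^ (n : ℕ))⁻¹ * (1 - r ^ (n : ℕ))⁻¹ *
    ((r ^ (n : ℕ) * ((2 * (Real.pi : ℂ) * Complex.I * ((n : ℕ) : ℂ) * z) ^ (k : ℕ)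
        / (Nat.factorial (k : ℕ) : ℂ))
      - q ^ (n : ℕ) * ((-(2 * (Real.pi : ℂ) * Complex.I * ((n : ℕ) : ℂ) * z)) ^ (k : ℕ)
        / (Nat.factorial (k : ℕ) : ℂ))) / ((n : ℕ) : ℂ))

noncomputable def EZc (q r x y : ℂ) (n : ℕ+) : ℂ :=
  (1 - q ^ (n : ℕ))⁻¹ * (1 - r ^ (n : ℕ))⁻¹ *
    ((r ^ (n : ℕ) * (x ^ (n : ℕ) - 1) - q ^ (n : ℕ) * (y ^ (n : ℕ) - 1)) / ((n : ℕ) : ℂ))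

lemma EZ_claimA {q r x y : ℂ} {ρ E : ℝ} (hq : ‖q‖ ≤ ρ) (hr : ‖r‖ ≤ ρ)
    (hx : ‖x‖ ≤ E) (hy : ‖y‖ ≤ E) (hE : 1 ≤ E) (hρ0 : 0 ≤ ρ) (hρE : ρ * E < 1) (p : ℕ × ℕ) :
    HasSum (fun n : ℕ+ => EZg q r x y (p, n))
      (EZlog q r x y p - EZlog q r 1 1 p) := by
  have hρ1 : ρ ≤ 1 := le_of_lt (lt_of_le_of_lt (le_mul_of_one_le_right hρ0 hE) hρE)
  have h1E : ‖(1 : ℂ)‖ ≤ E := by simpa using hE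
  have hb1 : ‖q ^ p.1 * r ^ (p.2 + 1) * x‖ < 1 :=
    lt_of_le_of_lt (EZ_small' hq hr hx hρ0 hρ1 hE (by omega)) hρE
  have ha1 : ‖q ^ (p.1 + 1) * r ^ p.2 * y‖ < 1 :=
    lt_of_le_of_lt (EZ_small' hq hr hy hρ0 hρ1 hE (by omega)) hρE
  have hb2 : ‖q ^ p.1 * r ^ (p.2 + 1) * 1‖ < 1 :=
    lt_of_le_of_lt (EZ_small' hq hr h1E hρ0 hρ1 hE (by omega)) hρE
  have ha2 : ‖q ^ (p.1 + 1) * r ^ p.2 * 1‖ < 1 :=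
    lt_of_le_of_lt (EZ_small' hq hr h1E hρ0 hρ1 hE (by omega)) hρE
  have h1 := EZ_hasSum_EZlt hb1
  have h2 := EZ_hasSum_EZlt ha1
  have h3 := EZ_hasSum_EZlt hb2
  have h4 := EZ_hasSum_EZlt ha2
  have hcomb := (h1.sub h2).sub (h3.sub h4)
  have hfe : (fun n : ℕ+ => EZg q r x y (p, n))
      = fun n : ℕ+ =>
        ((q ^ p.1 * r ^ (p.2 + 1) * x) ^ (n : ℕ) / ((n : ℕ) : ℂ)
          - (q ^ (p.1 + 1) * r ^ p.2 * y) ^ (n : ℕ) / ((n : ℕ) : ℂ))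
        - ((q ^ p.1 * r ^ (p.2 + 1) * 1) ^ (n : ℕ) / ((n : ℕ) : ℂ)
          - (q ^ (p.1 + 1) * r ^ p.2 * 1) ^ (n : ℕ) / ((n : ℕ) : ℂ)) := by
    funext n
    show EZg q r x y (p, n) = _
    rw [EZg]
    ring
  rw [hfe]
  show HasSum _ ((EZlt _ - EZlt _) - (EZlt _ - EZlt _))
  exact hcomb

lemma EZ_claimB {q r x y : ℂ} {ρ E : ℝ} (hq : ‖q‖ ≤ ρ) (hr : ‖r‖ ≤ ρ)
    (hx : ‖x‖ ≤ E) (hy : ‖y‖ ≤ E) (hE : 1 ≤ E) (hρ0 : 0 ≤ ρ) (hρE : ρ * E < 1) :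
    Summable (fun pn : (ℕ × ℕ) × ℕ+ => ‖EZg q r x y pn‖) := by
  have hρ1 : ρ ≤ 1 := le_of_lt (lt_of_le_of_lt (le_mul_of_one_le_right hρ0 hE) hρE)
  have hE0 : (0:ℝ) ≤ E := le_trans zero_le_one hE
  have hρE0 : (0:ℝ) ≤ ρ * E := mul_nonneg hρ0 hE0
  have hbound : ∀ pn : (ℕ × ℕ) × ℕ+,
      ‖EZg q r x y pn‖ ≤ (ρ ^ pn.1.1 * ρ ^ pn.1.2) * (4 * (ρ * E) ^ (pn.2 : ℕ)) := by
    rintro ⟨p, n⟩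
    have hα0 : (0:ℝ) ≤ ρ ^ p.1 * ρ ^ p.2 := by positivity
    have hα1 : ρ ^ p.1 * ρ ^ p.2 ≤ 1 := by
      have h1 : ρ ^ p.1 ≤ 1 := pow_le_one₀ hρ0 hρ1
      have h2 : ρ ^ p.2 ≤ 1 := pow_le_one₀ hρ0 hρ1
      nlinarith [pow_nonneg hρ0 p.1, pow_nonneg hρ0 p.2]
    have hnb : ‖q ^ p.1 * r ^ (p.2 + 1)‖ ≤ (ρ ^ p.1 * ρ ^ p.2) * ρ := by
      rw [norm_mul, norm_pow, norm_pow]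
      calc ‖q‖ ^ p.1 * ‖r‖ ^ (p.2 + 1) ≤ ρ ^ p.1 * ρ ^ (p.2 + 1) := by
            exact mul_le_mul (pow_le_pow_left₀ (norm_nonneg q) hq _)
              (pow_le_pow_left₀ (norm_nonneg r) hr _) (by positivity) (by positivity)
        _ = (ρ ^ p.1 * ρ ^ p.2) * ρ := by rw [pow_succ]; ring
    have hna : ‖q ^ (p.1 + 1) * r ^ p.2‖ ≤ (ρ ^ p.1 * ρ ^ p.2) * ρ := by
      rw [norm_mul, norm_pow, norm_pow]
      calc ‖q‖ ^ (p.1 + 1) * ‖r‖ ^ p.2 ≤ ρ ^ (p.1 + 1) * ρ ^ p.2 := by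
            exact mul_le_mul (pow_le_pow_left₀ (norm_nonneg q) hq _)
              (pow_le_pow_left₀ (norm_nonneg r) hr _) (by positivity) (by positivity)
        _ = (ρ ^ p.1 * ρ ^ p.2) * ρ := by rw [pow_succ]; ring
    have hxn : ‖x ^ (n : ℕ) - 1‖ ≤ E ^ (n : ℕ) + 1 := by
      refine le_trans (norm_sub_le _ _) ?_
      rw [norm_pow, norm_one]
      exact add_le_add (pow_le_pow_left₀ (norm_nonneg x) hx _) (le_refl 1)
    have hyn : ‖y ^ (n : ℕ) - 1‖ ≤ E ^ (n : ℕ) + 1 := by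
      refine le_trans (norm_sub_le _ _) ?_
      rw [norm_pow, norm_one]
      exact add_le_add (pow_le_pow_left₀ (norm_nonneg y) hy _) (le_refl 1)
    have hB : ‖(q ^ p.1 * r ^ (p.2 + 1)) ^ (n : ℕ) * (x ^ (n : ℕ) - 1)‖
        ≤ 2 * (ρ ^ p.1 * ρ ^ p.2) * (ρ * E) ^ (n : ℕ) := by
      rw [norm_mul, norm_pow]
      refine le_trans (mul_le_mul (pow_le_pow_left₀ (norm_nonneg _) hnb _) hxn
        (norm_nonneg _) (by positivity)) ?_
      exact EZ_pow_bound hα0 hα1 hρ0 hE (n : ℕ) n.ne_zero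
    have hA : ‖(q ^ (p.1 + 1) * r ^ p.2) ^ (n : ℕ) * (y ^ (n : ℕ) - 1)‖
        ≤ 2 * (ρ ^ p.1 * ρ ^ p.2) * (ρ * E) ^ (n : ℕ) := by
      rw [norm_mul, norm_pow]
      refine le_trans (mul_le_mul (pow_le_pow_left₀ (norm_nonneg _) hna _) hyn
        (norm_nonneg _) (by positivity)) ?_
      exact EZ_pow_bound hα0 hα1 hρ0 hE (n : ℕ) n.ne_zero
    have hdenom : (1:ℝ) ≤ ‖(((n : ℕ) : ℂ))‖ := by
      rw [Complex.norm_natCast]; exact_mod_cast n.one_le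
    calc ‖EZg q r x y (p, n)‖
        ≤ ‖(q ^ p.1 * r ^ (p.2 + 1)) ^ (n : ℕ) * (x ^ (n : ℕ) - 1)
            - (q ^ (p.1 + 1) * r ^ p.2) ^ (n : ℕ) * (y ^ (n : ℕ) - 1)‖ := by
          rw [EZg, norm_div]
          exact div_le_self (norm_nonneg _) hdenom
      _ ≤ 2 * (ρ ^ p.1 * ρ ^ p.2) * (ρ * E) ^ (n : ℕ)
          + 2 * (ρ ^ p.1 * ρ ^ p.2) * (ρ * E) ^ (n : ℕ) := le_trans (norm_sub_le _ _)
            (add_le_add hB hA)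
      _ = (ρ ^ p.1 * ρ ^ p.2) * (4 * (ρ * E) ^ (n : ℕ)) := by ring
  have hgeo2 : Summable (fun p : ℕ × ℕ => ρ ^ p.1 * ρ ^ p.2) :=
    (summable_geometric_of_lt_one hρ0 (lt_of_le_of_lt (le_mul_of_one_le_right hρ0 hE) hρE))
      |>.mul_of_nonneg
      (summable_geometric_of_lt_one hρ0 (lt_of_le_of_lt (le_mul_of_one_le_right hρ0 hE) hρE))
      (fun i => by positivity) (fun j => by positivity)
  have hgeoP : Summable (fun n : ℕ+ => 4 * (ρ * E) ^ (n : ℕ)) := by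
    refine Summable.mul_left 4 ?_
    exact (EZ_hasSum_pnat_geom (t := ρ * E)
      (by rwa [Real.norm_eq_abs, _root_.abs_of_nonneg hρE0])).summable
  have hprod : Summable (fun pn : (ℕ × ℕ) × ℕ+ =>
      (ρ ^ pn.1.1 * ρ ^ pn.1.2) * (4 * (ρ * E) ^ (pn.2 : ℕ))) :=
    hgeo2.mul_of_nonneg hgeoP (fun p => by positivity) (fun n => by positivity)
  exact hprod.of_nonneg_of_le (fun pn => norm_nonneg _) hbound |>.congr (fun _ => rfl)

end EZCore

section EZCore2

lemma EZ_claimD {q r x y : ℂ} (hq1 : ‖q‖ < 1) (hr1 : ‖r‖ < 1) (n : ℕ+) :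
    HasSum (fun p : ℕ × ℕ => EZg q r x y (p, n)) (EZc q r x y n) := by
  have hqn' : ‖q‖ ^ (n : ℕ) < 1 := pow_lt_one₀ (norm_nonneg q) hq1 n.ne_zero
  have hrn' : ‖r‖ ^ (n : ℕ) < 1 := pow_lt_one₀ (norm_nonneg r) hr1 n.ne_zero
  have hqn : ‖q ^ (n : ℕ)‖ < 1 := by rw [norm_pow]; exact hqn'
  have hrn : ‖r ^ (n : ℕ)‖ < 1 := by rw [norm_pow]; exact hrn'
  have hgq : HasSum (fun j : ℕ => (q ^ (n : ℕ)) ^ j) (1 - q ^ (n : ℕ))⁻¹ :=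
    hasSum_geometric_of_norm_lt_one hqn
  have hgr : HasSum (fun j : ℕ => (r ^ (n : ℕ)) ^ j) (1 - r ^ (n : ℕ))⁻¹ :=
    hasSum_geometric_of_norm_lt_one hrn
  have hsq : Summable (fun j : ℕ => ‖(q ^ (n : ℕ)) ^ j‖) := by
    simp only [norm_pow]
    exact summable_geometric_of_lt_one (by positivity) hqn'
  have hsr : Summable (fun j : ℕ => ‖(r ^ (n : ℕ)) ^ j‖) := by
    simp only [norm_pow]
    exact summable_geometric_of_lt_one (by positivity) hrn'
  have hgg : HasSum (fun p : ℕ × ℕ => (q ^ (n : ℕ)) ^ p.1 * (r ^ (n : ℕ)) ^ p.2)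
      ((1 - q ^ (n : ℕ))⁻¹ * (1 - r ^ (n : ℕ))⁻¹) :=
    hgq.mul hgr (summable_mul_of_summable_norm hsq hsr)
  have h := hgg.mul_right
    ((r ^ (n : ℕ) * (x ^ (n : ℕ) - 1) - q ^ (n : ℕ) * (y ^ (n : ℕ) - 1)) / ((n : ℕ) : ℂ))
  have hfe : (fun p : ℕ × ℕ => EZg q r x y (p, n))
      = fun p : ℕ × ℕ => ((q ^ (n : ℕ)) ^ p.1 * (r ^ (n : ℕ)) ^ p.2)
        * ((r ^ (n : ℕ) * (x ^ (n : ℕ) - 1) - q ^ (n : ℕ) * (y ^ (n : ℕ) - 1)) / ((n : ℕ) : ℂ)) := by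
    funext p
    show EZg q r x y (p, n) = _
    rw [EZg]
    ring
  rw [EZc]
  rw [hfe]
  convert h using 1

lemma EZ_claimE {q r : ℂ} (z : ℂ) (n : ℕ+) :
    HasSum (fun k : ℕ+ => EZd q r z n k)
      (EZc q r (Complex.exp (2 * (Real.pi : ℂ) * Complex.I * z))
        (Complex.exp (-(2 * (Real.pi : ℂ) * Complex.I) * z)) n) := by
  set w : ℂ := 2 * (Real.pi : ℂ) * Complex.I * ((n : ℕ) : ℂ) * z with hw
  have h1 := (EZ_hasSum_pnat_expm1 w).mul_left (r ^ (n : ℕ))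
  have h2 := (EZ_hasSum_pnat_expm1 (-w)).mul_left (q ^ (n : ℕ))
  have h3 := ((h1.sub h2).div_const (((n : ℕ) : ℂ)))
  have h4 := h3.mul_left ((1 - q ^ (n : ℕ))⁻¹ * (1 - r ^ (n : ℕ))⁻¹)
  have hxw : Complex.exp w = (Complex.exp (2 * (Real.pi : ℂ) * Complex.I * z)) ^ (n : ℕ) := by
    rw [hw, show 2 * (Real.pi : ℂ) * Complex.I * ((n : ℕ) : ℂ) * z
      = ((n : ℕ) : ℂ) * (2 * (Real.pi : ℂ) * Complex.I * z) by ring, Complex.exp_nat_mul]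
  have hyw : Complex.exp (-w) = (Complex.exp (-(2 * (Real.pi : ℂ) * Complex.I) * z)) ^ (n : ℕ) := by
    rw [hw, show -(2 * (Real.pi : ℂ) * Complex.I * ((n : ℕ) : ℂ) * z)
      = ((n : ℕ) : ℂ) * (-(2 * (Real.pi : ℂ) * Complex.I) * z) by ring, Complex.exp_nat_mul]
  rw [hxw, hyw] at h4
  have hfe : (fun k : ℕ+ => EZd q r z n k)
      = fun k : ℕ+ => (1 - q ^ (n : ℕ))⁻¹ * (1 - r ^ (n : ℕ))⁻¹ *
        ((r ^ (n : ℕ) * (w ^ (k : ℕ) / (Nat.factorial (k : ℕ) : ℂ))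
          - q ^ (n : ℕ) * ((-w) ^ (k : ℕ) / (Nat.factorial (k : ℕ) : ℂ))) / ((n : ℕ) : ℂ)) := by
    funext k
    rw [EZd]
  rw [hfe]
  rw [EZc]
  convert h4 using 2

lemma EZ_claimG {q r : ℂ} {ρ : ℝ} (hq : ‖q‖ ≤ ρ) (hr : ‖r‖ ≤ ρ) (hρ1 : ρ < 1)
    (z : ℂ) (k : ℕ+) :
    EZT q r z k = ∑' n : ℕ+, EZd q r z n k := by
  have hρ0 : (0:ℝ) ≤ ρ := le_trans (norm_nonneg q) hq
  obtain ⟨m, hm⟩ : ∃ m : ℕ, (k : ℕ) = m + 1 := ⟨(k : ℕ) - 1, by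
    have := k.pos
    omega⟩
  have hEZT : EZT q r z k
      = (-((2 * (Real.pi : ℂ) * Complex.I) ^ (k : ℕ) / (Nat.factorial ((k : ℕ) - 1) : ℂ))
          / (k : ℂ) * (-z) ^ (k : ℕ)) *
        ∑' j : ℕ+, (j : ℂ) ^ ((k : ℕ) - 1) *
          (q ^ (j : ℕ) - (-1 : ℂ) ^ (k : ℕ) * r ^ (j : ℕ)) /
          ((1 - q ^ (j : ℕ)) * (1 - r ^ (j : ℕ))) := by
    rw [EZT]; ring
  rw [hEZT, ← tsum_mul_left]
  refine tsum_congr fun n => ?_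
  have hqn : ‖q ^ (n : ℕ)‖ < 1 := by
    rw [norm_pow]
    exact lt_of_le_of_lt (pow_le_of_le_one (norm_nonneg q)
      (le_trans hq hρ1.le) n.ne_zero) (lt_of_le_of_lt hq hρ1)
  have hrn : ‖r ^ (n : ℕ)‖ < 1 := by
    rw [norm_pow]
    exact lt_of_le_of_lt (pow_le_of_le_one (norm_nonneg r)
      (le_trans hr hρ1.le) n.ne_zero) (lt_of_le_of_lt hr hρ1)
  have hq0 : (1 : ℂ) - q ^ (n : ℕ) ≠ 0 := EZ_one_sub_ne hqn
  have hr0 : (1 : ℂ) - r ^ (n : ℕ) ≠ 0 := EZ_one_sub_ne hrn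
  have hn0 : (((n : ℕ) : ℂ)) ≠ 0 := by
    exact_mod_cast n.ne_zero
  have hk0 : ((k : ℕ) : ℂ) ≠ 0 := by
    exact_mod_cast k.ne_zero
  have hfac : (Nat.factorial m : ℂ) ≠ 0 := by
    exact_mod_cast (Nat.factorial_pos m).ne'
  have hm1 : ((m : ℂ) + 1) ≠ 0 := Nat.cast_add_one_ne_zero m
  rw [EZd, hm]
  simp only [Nat.add_sub_cancel, Nat.factorial_succ]
  push_cast
  field_simp
  have hneg : ((-1 : ℂ)) ^ (m * 2) = 1 := by
    rw [show m * 2 = 2 * m from mul_comm m 2, pow_mul]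
    norm_num
  have hneg2 : ((-2 : ℂ)) ^ m = (-1) ^ m * 2 ^ m := neg_pow 2 m
  ring_nf
  simp only [hneg, hneg2]
  ring

end EZCore2

section EZCore3

lemma EZ_claimF {q r z : ℂ} {ρ E : ℝ} (hq : ‖q‖ ≤ ρ) (hr : ‖r‖ ≤ ρ) (hρ1 : ρ < 1)
    (hE : 1 ≤ E) (hρE : ρ * E < 1)
    (hzE : Real.exp (2 * Real.pi * ‖z‖) ≤ E) :
    Summable (fun nk : ℕ+ × ℕ+ => ‖EZd q r z nk.1 nk.2‖) := by
  have hρ0 : (0:ℝ) ≤ ρ := le_trans (norm_nonneg q) hq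
  have hρ1' : (0:ℝ) < 1 - ρ := by linarith
  set W : ℝ := 2 * Real.pi * ‖z‖ with hW
  have hW0 : 0 ≤ W := by positivity
  have hcn : ‖(2 * (Real.pi : ℂ) * Complex.I)‖ = 2 * Real.pi := by
    simp [
      _root_.abs_of_nonneg Real.pi_pos.le]
  have hwn : ∀ n : ℕ+, ‖(2 * (Real.pi : ℂ) * Complex.I * ((n : ℕ) : ℂ) * z)‖ = (n : ℕ) * W := by
    intro n
    rw [norm_mul, norm_mul, hcn, Complex.norm_natCast, hW]
    ring
  have hCq : ∀ n : ℕ+, ‖(1 - q ^ (n : ℕ))⁻¹‖ ≤ (1 - ρ)⁻¹ := by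
    intro n
    rw [norm_inv]
    refine inv_anti₀ hρ1' ?_
    have h1 : ‖q‖ ^ (n : ℕ) ≤ ρ :=
      le_trans (pow_le_of_le_one (norm_nonneg q) (le_trans hq hρ1.le) n.ne_zero) hq
    have h2 := norm_sub_norm_le (1 : ℂ) (q ^ (n : ℕ))
    rw [norm_one, norm_pow] at h2
    linarith
  have hCr : ∀ n : ℕ+, ‖(1 - r ^ (n : ℕ))⁻¹‖ ≤ (1 - ρ)⁻¹ := by
    intro n
    rw [norm_inv]
    refine inv_anti₀ hρ1' ?_
    have h1 : ‖r‖ ^ (n : ℕ) ≤ ρ :=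
      le_trans (pow_le_of_le_one (norm_nonneg r) (le_trans hr hρ1.le) n.ne_zero) hr
    have h2 := norm_sub_norm_le (1 : ℂ) (r ^ (n : ℕ))
    rw [norm_one, norm_pow] at h2
    linarith
  have hqρn : ∀ n : ℕ+, ‖q ^ (n : ℕ)‖ ≤ ρ ^ (n : ℕ) := fun n => by
    rw [norm_pow]; exact pow_le_pow_left₀ (norm_nonneg q) hq _
  have hrρn : ∀ n : ℕ+, ‖r ^ (n : ℕ)‖ ≤ ρ ^ (n : ℕ) := fun n => by
    rw [norm_pow]; exact pow_le_pow_left₀ (norm_nonneg r) hr _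
  -- the termwise bound
  have hbound : ∀ (n k : ℕ+), ‖EZd q r z n k‖
      ≤ ((1 - ρ)⁻¹ * (1 - ρ)⁻¹ * (2 * ρ ^ (n : ℕ)))
        * (((n : ℕ) * W) ^ (k : ℕ) / (Nat.factorial (k : ℕ) : ℝ)) := by
    intro n k
    have hinv0 : (0:ℝ) ≤ (1 - ρ)⁻¹ := inv_nonneg.2 hρ1'.le
    have hd1 : (1:ℝ) ≤ ‖(((n : ℕ) : ℂ))‖ := by
      rw [Complex.norm_natCast]; exact_mod_cast n.one_le
    have hterm : ‖(r ^ (n : ℕ) * ((2 * (Real.pi : ℂ) * Complex.I * ((n : ℕ) : ℂ) * z) ^ (k : ℕ)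
          / (Nat.factorial (k : ℕ) : ℂ))
        - q ^ (n : ℕ) * ((-(2 * (Real.pi : ℂ) * Complex.I * ((n : ℕ) : ℂ) * z)) ^ (k : ℕ)
          / (Nat.factorial (k : ℕ) : ℂ))) / (((n : ℕ) : ℂ))‖
        ≤ (2 * ρ ^ (n : ℕ)) * (((n : ℕ) * W) ^ (k : ℕ) / (Nat.factorial (k : ℕ) : ℝ)) := by
      rw [norm_div]
      refine le_trans (div_le_self (norm_nonneg _) hd1) ?_
      refine le_trans (norm_sub_le _ _) ?_
      simp only [norm_mul, norm_div, norm_pow, norm_neg, hwn n, Complex.norm_natCast]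
      have h1 : ‖r‖ ^ (n : ℕ) ≤ ρ ^ (n : ℕ) := pow_le_pow_left₀ (norm_nonneg r) hr _
      have h2 : ‖q‖ ^ (n : ℕ) ≤ ρ ^ (n : ℕ) := pow_le_pow_left₀ (norm_nonneg q) hq _
      have h3 : (0:ℝ) ≤ (((n : ℕ) : ℝ) * W) ^ (k : ℕ) / (Nat.factorial (k : ℕ) : ℝ) := by
        positivity
      nlinarith [mul_le_mul_of_nonneg_right h1 h3, mul_le_mul_of_nonneg_right h2 h3]
    calc ‖EZd q r z n k‖
        ≤ ((1 - ρ)⁻¹ * (1 - ρ)⁻¹)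
          * ((2 * ρ ^ (n : ℕ)) * (((n : ℕ) * W) ^ (k : ℕ) / (Nat.factorial (k : ℕ) : ℝ))) := by
          rw [EZd, norm_mul, norm_mul]
          refine mul_le_mul (mul_le_mul (hCq n) (hCr n) (norm_nonneg _) hinv0) hterm
            (norm_nonneg _) (by positivity)
      _ = ((1 - ρ)⁻¹ * (1 - ρ)⁻¹ * (2 * ρ ^ (n : ℕ)))
          * (((n : ℕ) * W) ^ (k : ℕ) / (Nat.factorial (k : ℕ) : ℝ)) := by ring
  -- summability via iterated sums
  refine (summable_prod_of_nonneg (fun nk => norm_nonneg _)).2 ⟨?_, ?_⟩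
  · intro n
    refine Summable.of_nonneg_of_le (fun k => norm_nonneg _) (hbound n) ?_
    exact ((EZ_hasSum_pnat_expm1_real ((n : ℕ) * W)).summable).mul_left _
  · have houter : ∀ n : ℕ+, (∑' k : ℕ+, ‖EZd q r z n k‖)
        ≤ (2 * ((1 - ρ)⁻¹ * (1 - ρ)⁻¹)) * (ρ * E) ^ (n : ℕ) := by
      intro n
      have hsd : Summable (fun k : ℕ+ => ‖EZd q r z n k‖) :=
        Summable.of_nonneg_of_le (fun k => norm_nonneg _) (hbound n)
          (((EZ_hasSum_pnat_expm1_real ((n : ℕ) * W)).summable).mul_left _)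
      have hexp : (∑' k : ℕ+, ((n : ℕ) * W) ^ (k : ℕ) / (Nat.factorial (k : ℕ) : ℝ))
          = Real.exp ((n : ℕ) * W) - 1 := (EZ_hasSum_pnat_expm1_real ((n : ℕ) * W)).tsum_eq
      have hEn : Real.exp ((n : ℕ) * W) - 1 ≤ E ^ (n : ℕ) := by
        have h1 : Real.exp ((n : ℕ) * W) = (Real.exp W) ^ (n : ℕ) := Real.exp_nat_mul W (n : ℕ)
        have h2 : (Real.exp W) ^ (n : ℕ) ≤ E ^ (n : ℕ) :=
          pow_le_pow_left₀ (Real.exp_nonneg W) hzE _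
        nlinarith [h1, h2]
      calc (∑' k : ℕ+, ‖EZd q r z n k‖)
          ≤ ∑' k : ℕ+, ((1 - ρ)⁻¹ * (1 - ρ)⁻¹ * (2 * ρ ^ (n : ℕ)))
            * (((n : ℕ) * W) ^ (k : ℕ) / (Nat.factorial (k : ℕ) : ℝ)) :=
            Summable.tsum_le_tsum (hbound n) hsd
              (((EZ_hasSum_pnat_expm1_real ((n : ℕ) * W)).summable).mul_left _)
        _ = ((1 - ρ)⁻¹ * (1 - ρ)⁻¹ * (2 * ρ ^ (n : ℕ))) * (Real.exp ((n : ℕ) * W) - 1) := by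
            rw [tsum_mul_left, hexp]
        _ ≤ ((1 - ρ)⁻¹ * (1 - ρ)⁻¹ * (2 * ρ ^ (n : ℕ))) * E ^ (n : ℕ) := by
            refine mul_le_mul_of_nonneg_left hEn ?_
            have : (0:ℝ) ≤ (1 - ρ)⁻¹ := inv_nonneg.2 hρ1'.le
            positivity
        _ = (2 * ((1 - ρ)⁻¹ * (1 - ρ)⁻¹)) * (ρ ^ (n : ℕ) * E ^ (n : ℕ)) := by ring
        _ = (2 * ((1 - ρ)⁻¹ * (1 - ρ)⁻¹)) * (ρ * E) ^ (n : ℕ) := by rw [mul_pow]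
    refine Summable.of_nonneg_of_le (fun n => tsum_nonneg (fun k => norm_nonneg _)) houter ?_
    refine Summable.mul_left _ ?_
    have hρE0 : (0:ℝ) ≤ ρ * E := mul_nonneg hρ0 (le_trans zero_le_one hE)
    exact (EZ_hasSum_pnat_geom (t := ρ * E)
      (by rwa [Real.norm_eq_abs, _root_.abs_of_nonneg hρE0])).summable

end EZCore3

section EZCore4

lemma EZ_core {q r z : ℂ} {ρ E : ℝ} (hq : ‖q‖ ≤ ρ) (hr : ‖r‖ ≤ ρ) (hρ0 : 0 ≤ ρ)
    (hE : 1 ≤ E) (hρE : ρ * E < 1)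
    (hzE : Real.exp (2 * Real.pi * ‖z‖) ≤ E) :
    Summable (fun k : ℕ+ => ‖EZT q r z k‖) ∧
      (∑' p : ℕ × ℕ, EZlog q r (Complex.exp (2 * (Real.pi : ℂ) * Complex.I * z))
          (Complex.exp (-(2 * (Real.pi : ℂ) * Complex.I) * z)) p)
        - (∑' p : ℕ × ℕ, EZlog q r 1 1 p) = ∑' k : ℕ+, EZT q r z k := by
  have hρ1 : ρ < 1 := lt_of_le_of_lt (le_mul_of_one_le_right hρ0 hE) hρE
  have hq1 : ‖q‖ < 1 := lt_of_le_of_lt hq hρ1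
  have hr1 : ‖r‖ < 1 := lt_of_le_of_lt hr hρ1
  set x := Complex.exp (2 * (Real.pi : ℂ) * Complex.I * z) with hxdef
  set y := Complex.exp (-(2 * (Real.pi : ℂ) * Complex.I) * z) with hydef
  have hcn : ‖(2 * (Real.pi : ℂ) * Complex.I)‖ = 2 * Real.pi := by
    simp [
      _root_.abs_of_nonneg Real.pi_pos.le]
  have hexpb : ∀ w : ℂ, ‖w‖ ≤ 2 * Real.pi * ‖z‖ → ‖Complex.exp w‖ ≤ E := by
    intro w hw
    rw [Complex.norm_exp]
    refine le_trans (Real.exp_le_exp.2 (le_trans (le_abs_self _)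
      (le_trans (Complex.abs_re_le_norm w) hw))) hzE
  have hx : ‖x‖ ≤ E := by
    refine hexpb _ ?_
    rw [norm_mul, hcn]
  have hy : ‖y‖ ≤ E := by
    refine hexpb _ ?_
    rw [norm_mul, norm_neg, hcn]
  -- summabilities of the log series
  have hS1 : Summable (EZlog q r x y) := (EZ_prod_exp hq hr hx hy hE hρ0 hρE).1
  have h1E : ‖(1 : ℂ)‖ ≤ E := by simpa using hE
  have hS2 : Summable (EZlog q r 1 1) := (EZ_prod_exp hq hr h1E h1E hE hρ0 hρE).1
  -- summability of the double families
  have hgB : Summable (fun pn : (ℕ × ℕ) × ℕ+ => ‖EZg q r x y pn‖) :=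
    EZ_claimB hq hr hx hy hE hρ0 hρE
  have hgsum : Summable (EZg q r x y) := hgB.of_norm
  have hdF : Summable (fun nk : ℕ+ × ℕ+ => ‖EZd q r z nk.1 nk.2‖) :=
    EZ_claimF hq hr hρ1 hE hρE hzE
  have hdsum : Summable (fun nk : ℕ+ × ℕ+ => EZd q r z nk.1 nk.2) := hdF.of_norm
  -- the pieces
  have hA : ∀ p : ℕ × ℕ, HasSum (fun n : ℕ+ => EZg q r x y (p, n))
      (EZlog q r x y p - EZlog q r 1 1 p) := fun p =>
    EZ_claimA hq hr hx hy hE hρ0 hρE p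
  have hD : ∀ n : ℕ+, HasSum (fun p : ℕ × ℕ => EZg q r x y (p, n)) (EZc q r x y n) :=
    fun n => EZ_claimD hq1 hr1 n
  have hEc : ∀ n : ℕ+, HasSum (fun k : ℕ+ => EZd q r z n k) (EZc q r x y n) := fun n => by
    rw [hxdef, hydef]
    exact EZ_claimE z n
  have hG : ∀ k : ℕ+, EZT q r z k = ∑' n : ℕ+, EZd q r z n k := fun k =>
    EZ_claimG hq hr hρ1 z k
  constructor
  · -- summability of the Taylor coefficients
    have hswap : Summable (fun kn : ℕ+ × ℕ+ => ‖EZd q r z kn.2 kn.1‖) := hdF.prod_symm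
    have hpair := (summable_prod_of_nonneg (fun _ => norm_nonneg _)).1 hswap
    refine Summable.of_nonneg_of_le (fun k => norm_nonneg _) (fun k => ?_) hpair.2
    rw [hG k]
    exact norm_tsum_le_tsum_norm (hpair.1 k)
  · -- the sum identity
    calc (∑' p : ℕ × ℕ, EZlog q r x y p) - ∑' p : ℕ × ℕ, EZlog q r 1 1 p
        = ∑' p : ℕ × ℕ, (EZlog q r x y p - EZlog q r 1 1 p) := (Summable.tsum_sub hS1 hS2).symm
      _ = ∑' p : ℕ × ℕ, ∑' n : ℕ+, EZg q r x y (p, n) :=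
          tsum_congr fun p => ((hA p).tsum_eq).symm
      _ = ∑' pn : (ℕ × ℕ) × ℕ+, EZg q r x y pn := (Summable.tsum_prod hgsum).symm
      _ = ∑' nq : ℕ+ × (ℕ × ℕ), EZg q r x y nq.swap :=
          ((Equiv.prodComm (ℕ+) (ℕ × ℕ)).tsum_eq (EZg q r x y)).symm
      _ = ∑' n : ℕ+, ∑' p : ℕ × ℕ, EZg q r x y (p, n) := Summable.tsum_prod hgsum.prod_symm
      _ = ∑' n : ℕ+, EZc q r x y n := tsum_congr fun n => (hD n).tsum_eq
      _ = ∑' n : ℕ+, ∑' k : ℕ+, EZd q r z n k := tsum_congr fun n => ((hEc n).tsum_eq).symm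
      _ = ∑' k : ℕ+, ∑' n : ℕ+, EZd q r z n k := Summable.tsum_comm hdsum.prod_symm
      _ = ∑' k : ℕ+, EZT q r z k := tsum_congr fun k => (hG k).symm

end EZCore4

/-- the elliptic zeta values are the Taylor coefficients of the logarithm
of `Γ(z+σ,τ,σ)/Γ(σ,τ,σ)`: for `z` small the series `∑ (Z_j(τ,σ)/j)(-z)^j` converges
absolutely and its exponential is `Γ(z+σ,τ,σ)/Γ(σ,τ,σ)`. -/
theorem ellipticGamma_log_taylor_ellipticZeta
    (τ σ : ℂ) (hτ : τ ∈ UHP) (hσ : σ ∈ UHP) :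
    ∃ ε > (0 : ℝ), ∀ z : ℂ, ‖z‖ < ε →
      Summable (fun j : ℕ+ => ‖ellipticZeta (j : ℕ) τ σ / (j : ℂ) * (-z) ^ (j : ℕ)‖) ∧
      ellipticGamma (z + σ) τ σ / ellipticGamma σ τ σ =
        Complex.exp (∑' j : ℕ+, ellipticZeta (j : ℕ) τ σ / (j : ℂ) * (-z) ^ (j : ℕ)) := by
  have hπ := Real.pi_pos
  have hUHP : ∀ w : ℂ, w ∈ UHP → ‖qexp w‖ < 1 := by
    intro w hw
    rw [qexp, Complex.norm_exp, Real.exp_lt_one_iff]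
    have him : (2 * (Real.pi : ℂ) * Complex.I * w).re = -(2 * Real.pi * w.im) := by
      simp [Complex.mul_re, Complex.mul_im]
    rw [him]
    have hwim : 0 < w.im := hw
    nlinarith
  have hq1 : ‖qexp τ‖ < 1 := hUHP τ hτ
  have hr1 : ‖qexp σ‖ < 1 := hUHP σ hσ
  have hq0 : qexp τ ≠ 0 := Complex.exp_ne_zero _
  set q := qexp τ with hqdef
  set r := qexp σ with hrdef
  set ρ := max ‖q‖ ‖r‖ with hρdef
  have hρpos : 0 < ρ := lt_of_lt_of_le (norm_pos_iff.2 hq0) (le_max_left _ _)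
  have hρ1 : ρ < 1 := max_lt hq1 hr1
  set ε := Real.log ρ⁻¹ / (4 * Real.pi) with hεdef
  have hε : 0 < ε := div_pos (Real.log_pos ((one_lt_inv₀ hρpos).2 hρ1)) (by positivity)
  set E := Real.exp (2 * Real.pi * ε) with hEdef
  have hE1 : (1 : ℝ) ≤ E := Real.one_le_exp (by positivity)
  have hρE : ρ * E < 1 := by
    have h4 : 2 * Real.pi * ε + 2 * Real.pi * ε = Real.log ρ⁻¹ := by
      rw [hεdef]
      field_simp
      ring
    have hEE : E * E = ρ⁻¹ := by
      rw [hEdef, ← Real.exp_add, h4, Real.exp_log (by positivity)]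
    have h2 : (ρ * E) * (ρ * E) = ρ := by
      have h3 : (ρ * E) * (ρ * E) = (ρ * ρ) * (E * E) := by ring
      rw [h3, hEE]
      field_simp
    nlinarith [mul_pos hρpos (lt_of_lt_of_le one_pos hE1 : (0:ℝ) < E)]
  refine ⟨ε, hε, fun z hz => ?_⟩
  have hzE : Real.exp (2 * Real.pi * ‖z‖) ≤ E := by
    rw [hEdef]
    exact Real.exp_le_exp.2 (by nlinarith [hz.le])
  set x := Complex.exp (2 * (Real.pi : ℂ) * Complex.I * z) with hxdef
  set y := Complex.exp (-(2 * (Real.pi : ℂ) * Complex.I) * z) with hydef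
  obtain ⟨hsumT, hsumEq⟩ := EZ_core (q := q) (r := r) (z := z)
    (le_max_left _ _) (le_max_right _ _) hρpos.le hE1 hρE hzE
  have hTZ : ∀ k : ℕ+, ellipticZeta (k : ℕ) τ σ / (k : ℂ) * (-z) ^ (k : ℕ) = EZT q r z k :=
    fun k => rfl
  constructor
  · have he : (fun j : ℕ+ => ‖ellipticZeta (j : ℕ) τ σ / (j : ℂ) * (-z) ^ (j : ℕ)‖)
        = fun j : ℕ+ => ‖EZT q r z j‖ := funext fun j => by rw [hTZ j]
    rw [he]
    exact hsumT
  · -- norm bounds for x, y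
    have hcn : ‖(2 * (Real.pi : ℂ) * Complex.I)‖ = 2 * Real.pi := by
      simp [
        _root_.abs_of_nonneg Real.pi_pos.le]
    have hexpb : ∀ w : ℂ, ‖w‖ ≤ 2 * Real.pi * ‖z‖ → ‖Complex.exp w‖ ≤ E := by
      intro w hw
      rw [Complex.norm_exp]
      exact le_trans (Real.exp_le_exp.2 (le_trans (le_abs_self _)
        (le_trans (Complex.abs_re_le_norm w) hw))) hzE
    have hx : ‖x‖ ≤ E := hexpb _ (le_of_eq (by rw [norm_mul, hcn]))
    have hy : ‖y‖ ≤ E := hexpb _ (le_of_eq (by rw [norm_mul, norm_neg, hcn]))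
    have h1E : ‖(1 : ℂ)‖ ≤ E := by simpa using hE1
    obtain ⟨hS1, hP1⟩ := EZ_prod_exp (q := q) (r := r) (u := x) (v := y)
      (le_max_left _ _) (le_max_right _ _) hx hy hE1 hρpos.le hρE
    obtain ⟨hS2, hP2⟩ := EZ_prod_exp (q := q) (r := r) (u := (1:ℂ)) (v := (1:ℂ))
      (le_max_left _ _) (le_max_right _ _) h1E h1E hE1 hρpos.le hρE
    have hrr : r * Complex.exp (-(2 * (Real.pi : ℂ) * Complex.I) * σ) = 1 := by
      rw [hrdef]
      rw [show qexp σ = Complex.exp (2 * (Real.pi : ℂ) * Complex.I * σ) from rfl,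
        ← Complex.exp_add,
        show 2 * (Real.pi : ℂ) * Complex.I * σ + -(2 * (Real.pi : ℂ) * Complex.I) * σ = 0 by ring,
        Complex.exp_zero]
    have hcr : Complex.exp (2 * (Real.pi : ℂ) * Complex.I * σ) = r := rfl
    have hGz : ellipticGamma (z + σ) τ σ
        = ∏' p : ℕ × ℕ, ((1 - q ^ (p.1 + 1) * r ^ p.2 * y) / (1 - q ^ p.1 * r ^ (p.2 + 1) * x)) := by
      rw [ellipticGamma]
      refine tprod_congr fun p => ?_
      have hnum : q ^ (p.1 + 1) * r ^ (p.2 + 1)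
          * Complex.exp (-(2 * (Real.pi : ℂ) * Complex.I) * (z + σ))
          = q ^ (p.1 + 1) * r ^ p.2 * y := by
        rw [show (-(2 * (Real.pi : ℂ) * Complex.I) * (z + σ))
            = (-(2 * (Real.pi : ℂ) * Complex.I) * z) + (-(2 * (Real.pi : ℂ) * Complex.I) * σ)
            by ring, Complex.exp_add, ← hydef]
        calc q ^ (p.1 + 1) * r ^ (p.2 + 1) * (y * Complex.exp (-(2 * (Real.pi : ℂ) * Complex.I) * σ))
            = q ^ (p.1 + 1) * r ^ p.2 * y
              * (r * Complex.exp (-(2 * (Real.pi : ℂ) * Complex.I) * σ)) := by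
              rw [pow_succ]; ring
          _ = q ^ (p.1 + 1) * r ^ p.2 * y := by rw [hrr, mul_one]
      have hden : q ^ p.1 * r ^ p.2 * Complex.exp (2 * (Real.pi : ℂ) * Complex.I * (z + σ))
          = q ^ p.1 * r ^ (p.2 + 1) * x := by
        rw [show (2 * (Real.pi : ℂ) * Complex.I * (z + σ))
            = (2 * (Real.pi : ℂ) * Complex.I * z) + (2 * (Real.pi : ℂ) * Complex.I * σ)
            by ring, Complex.exp_add, ← hxdef, hcr, pow_succ]
        ring
      rw [hnum, hden]
    have hGσ : ellipticGamma σ τ σ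
        = ∏' p : ℕ × ℕ,
          ((1 - q ^ (p.1 + 1) * r ^ p.2 * 1) / (1 - q ^ p.1 * r ^ (p.2 + 1) * 1)) := by
      rw [ellipticGamma]
      refine tprod_congr fun p => ?_
      have hnum : q ^ (p.1 + 1) * r ^ (p.2 + 1)
          * Complex.exp (-(2 * (Real.pi : ℂ) * Complex.I) * σ)
          = q ^ (p.1 + 1) * r ^ p.2 * 1 := by
        calc q ^ (p.1 + 1) * r ^ (p.2 + 1) * Complex.exp (-(2 * (Real.pi : ℂ) * Complex.I) * σ)
            = q ^ (p.1 + 1) * r ^ p.2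
              * (r * Complex.exp (-(2 * (Real.pi : ℂ) * Complex.I) * σ)) := by
              rw [pow_succ]; ring
          _ = q ^ (p.1 + 1) * r ^ p.2 * 1 := by rw [hrr]
      have hden : q ^ p.1 * r ^ p.2 * Complex.exp (2 * (Real.pi : ℂ) * Complex.I * σ)
          = q ^ p.1 * r ^ (p.2 + 1) * 1 := by
        rw [hcr, pow_succ, mul_one]
        ring
      rw [hnum, hden]
    rw [hGz, hGσ, hP1, hP2, ← Complex.exp_sub]
    rw [show (∑' j : ℕ+, ellipticZeta (j : ℕ) τ σ / (j : ℂ) * (-z) ^ (j : ℕ))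
      = ∑' k : ℕ+, EZT q r z k from tsum_congr hTZ]
    exact congrArg Complex.exp hsumEq
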